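/- Newton's inequalities: let n ≥ 2 and let f(z) = Σ_{k=0}^n a_k z^k be a real polynomial of degree at most n all of whose complex roots are real. Then for every k with 1 ≤ k ≤ n − 1, (a_k / C(n,k))^2 ≥ (a_{k+1} / C(n,k+1)) · (a_{k−1} / C(n,k−1)), where C(n,k) denotes the binomial coefficient. If moreover all coefficients a_k are nonnegative, then every root of f is real and nonpositive. -/

import Mathlib

open Polynomial

lemma splits_of_roots_real : ∀ (d : ℕ) (f : Polynomial ℝ), f.natDegree ≤ d →
    (∀ z : ℂ, Polynomial.aeval z f = 0 → z.im = 0) → f.Splits := by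
  intro d
  induction d with
  | zero => intro f hd _; exact Splits.of_natDegree_le_one (le_trans hd zero_le_one)
  | succ d ih =>
    intro f hd hroots
    by_cases h0 : f.natDegree = 0
    · exact Splits.of_natDegree_le_one (le_trans h0.le zero_le_one)
    · have hf0 : f ≠ 0 := fun h => h0 (by simp [h])
      set g : Polynomial ℂ := f.map (algebraMap ℝ ℂ) with hg
      have hgdeg : 0 < g.degree := by
        rw [hg, degree_map]
        exact natDegree_pos_iff_degree_pos.mp (Nat.pos_of_ne_zero h0)
      obtain ⟨z, hz⟩ := Complex.exists_root hgdeg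
      have hzf : Polynomial.aeval z f = 0 := by
        rw [aeval_def, ← eval_map]; exact hz
      have hzim := hroots z hzf
      have hzr : z = ((z.re : ℝ) : ℂ) := by
        apply Complex.ext <;> simp [hzim]
      have hroot : f.IsRoot z.re := by
        have h2 : (algebraMap ℝ ℂ) (f.eval z.re) = 0 := by
          rw [← aeval_algebraMap_apply_eq_algebraMap_eval]
          show Polynomial.aeval ((algebraMap ℝ ℂ) z.re) f = 0
          have : (algebraMap ℝ ℂ) z.re = z := hzr.symm
          rw [this, hzf]
        exact (_root_.map_eq_zero (algebraMap ℝ ℂ)).mp h2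
      obtain ⟨g', hg'⟩ := (dvd_iff_isRoot.mpr hroot)
      have hg'0 : g' ≠ 0 := fun h => hf0 (by rw [hg', h, mul_zero])
      have hdeg' : g'.natDegree ≤ d := by
        have : f.natDegree = 1 + g'.natDegree := by
          rw [hg', natDegree_mul (X_sub_C_ne_zero _) hg'0, natDegree_X_sub_C]
        omega
      have hroots' : ∀ z : ℂ, Polynomial.aeval z g' = 0 → z.im = 0 := by
        intro w hw
        apply hroots w
        rw [hg', map_mul, hw, mul_zero]
      rw [hg']
      exact Splits.mul (Splits.X_sub_C _) (ih g' hdeg' hroots')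

lemma splits_derivative (f : Polynomial ℝ) (h : f.Splits) :
    (Polynomial.derivative f).Splits := by
  by_cases h0 : f.natDegree = 0
  · obtain ⟨c, rfl⟩ := natDegree_eq_zero.mp h0
    simp only [derivative_C]
    exact Splits.zero
  · have hpos : 0 < f.natDegree := Nat.pos_of_ne_zero h0
    have hdeq : (Polynomial.derivative f).degree = ((f.natDegree - 1 : ℕ) : WithBot ℕ) :=
      degree_derivative_eq f hpos
    have hd0 : Polynomial.derivative f ≠ 0 := by
      intro h'
      rw [h', degree_zero] at hdeq
      simp at hdeq
    have hnd : (Polynomial.derivative f).natDegree = f.natDegree - 1 :=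
      natDegree_eq_of_degree_eq_some hdeq
    rw [splits_iff_card_roots]
    have h1 : Multiset.card f.roots = f.natDegree := splits_iff_card_roots.mp h
    have h2 := f.card_roots_le_derivative
    have h3 := (Polynomial.derivative f).card_roots'
    omega

lemma splits_reflect : ∀ (N : ℕ) (f : Polynomial ℝ), f.natDegree ≤ N →
    f.Splits → (Polynomial.reflect N f).Splits := by
  intro N
  induction N with
  | zero =>
    intro f hd _
    obtain ⟨c, rfl⟩ := natDegree_eq_zero.mp (Nat.le_zero.mp hd)
    rw [reflect_C]
    exact Splits.mul (Splits.C _) (Splits.pow Splits.X _)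
  | succ N ih =>
    intro f hd hs
    by_cases h0 : f.natDegree = 0
    · obtain ⟨c, rfl⟩ := natDegree_eq_zero.mp h0
      rw [reflect_C]
      exact Splits.mul (Splits.C _) (Splits.pow Splits.X _)
    · have hf0 : f ≠ 0 := fun h => h0 (by simp [h])
      have hdeg0 : f.degree ≠ 0 := by
        rwa [degree_eq_natDegree hf0, Ne, Nat.cast_eq_zero]
      obtain ⟨r, hr⟩ := Splits.exists_eval_eq_zero hs hdeg0
      have hroot : f.IsRoot r := by simpa using hr
      obtain ⟨g, hg⟩ := dvd_iff_isRoot.mpr hroot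
      have hg0 : g ≠ 0 := fun h => hf0 (by rw [hg, h, mul_zero])
      have hnd : f.natDegree = 1 + g.natDegree := by
        rw [hg, natDegree_mul (X_sub_C_ne_zero _) hg0, natDegree_X_sub_C]
      have hgd : g.natDegree ≤ N := by omega
      have hgs : g.Splits := by
        have hmul : (X - C r) * g ≠ 0 := mul_ne_zero (X_sub_C_ne_zero r) hg0
        have := (splits_mul (X_sub_C_ne_zero r) hg0).mp (hg ▸ hs)
        exact this.2
      rw [hg, show N + 1 = 1 + N by omega,
        reflect_mul _ _ (natDegree_X_sub_C (x := r)).le hgd]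
      apply Splits.mul
      · apply Splits.of_natDegree_le_one
        have : Polynomial.reflect 1 (X - C r) = 1 - C r * X := by
          rw [show (X - C r : Polynomial ℝ) = C (-r) + X by rw [map_neg]; ring, reflect_add, reflect_C,
            show (X : Polynomial ℝ) = X ^ 1 by ring, reflect_monomial]
          simp [revAt_le]
          ring
        rw [this]
        compute_degree
      · exact ih g hgd hgs

lemma quad_disc (q : Polynomial ℝ) (hq : q.natDegree ≤ 2) (hs : q.Splits) :
    4 * (q.coeff 2 * q.coeff 0) ≤ (q.coeff 1) ^ 2 := by
  by_cases h2 : q.coeff 2 = 0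
  · rw [h2]; nlinarith [sq_nonneg (q.coeff 1)]
  · have hq0 : q ≠ 0 := fun h => h2 (by simp [h])
    have hnd : q.natDegree = 2 := le_antisymm hq (le_natDegree_of_ne_zero h2)
    have hcard : Multiset.card q.roots = 2 := by
      rw [splits_iff_card_roots.mp hs, hnd]
    obtain ⟨r, s, hrs⟩ := Multiset.card_eq_two.mp hcard
    have hfact := Splits.eq_prod_roots hs
    rw [hrs] at hfact
    have hfact2 : q = C q.leadingCoeff * ((X - C r) * (X - C s)) := by
      rw [hfact]
      simp
    clear hfact
    set c := q.leadingCoeff with hc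
    have expand : (X - C r) * (X - C s) = X ^ 2 - C (r + s) * X + C (r * s) := by
      simp only [C_add, C_mul]; ring
    have hq' : q = C c * (X ^ 2 - C (r + s) * X + C (r * s)) := by
      rw [hfact2, expand]
    have e0 : q.coeff 0 = c * (r * s) := by rw [hq']; simp
    have e1 : q.coeff 1 = c * (-(r + s)) := by
      rw [hq']
      simp [coeff_sub, coeff_add, coeff_C_mul, coeff_X_pow, coeff_C, coeff_X]
    have e2 : q.coeff 2 = c := by
      rw [hq']
      simp [coeff_sub, coeff_add, coeff_C_mul, coeff_X_pow, coeff_C, coeff_X]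
    rw [e0, e1, e2]
    nlinarith [sq_nonneg (c * (r - s))]

lemma splits_iter_deriv (f : Polynomial ℝ) (h : f.Splits) (k : ℕ) :
    ((Polynomial.derivative)^[k] f).Splits := by
  induction k with
  | zero => simpa using h
  | succ k ih => rw [Function.iterate_succ_apply']; exact splits_derivative _ ih

lemma natDegree_reflect_le (f : Polynomial ℝ) (N : ℕ) (h : f.natDegree ≤ N) :
    (Polynomial.reflect N f).natDegree ≤ N := by
  apply natDegree_le_iff_coeff_eq_zero.mpr
  intro i hi
  rw [coeff_reflect, revAt_eq_self_of_lt hi]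
  exact coeff_eq_zero_of_natDegree_lt (lt_of_le_of_lt h hi)

lemma dfact (a t : ℕ) : (a + t).descFactorial t * a.factorial = (a + t).factorial := by
  rw [Nat.descFactorial_eq_factorial_mul_choose]
  have h := Nat.choose_mul_factorial_mul_factorial (Nat.le_add_left t a)
  have h2 : a + t - t = a := by omega
  rw [h2] at h
  calc t.factorial * (a + t).choose t * a.factorial
      = (a + t).choose t * t.factorial * a.factorial := by ring
    _ = (a + t).factorial := h

lemma newton_aux (m t : ℕ) (f : Polynomial ℝ) (hdeg : f.natDegree ≤ m + t + 2)
    (hs : f.Splits) :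
    (f.coeff (m + 2) / (((m + t + 2).choose (m + 2) : ℕ) : ℝ)) *
        (f.coeff m / (((m + t + 2).choose m : ℕ) : ℝ)) ≤
      (f.coeff (m + 1) / (((m + t + 2).choose (m + 1) : ℕ) : ℝ)) ^ 2 := by
  set n := m + t + 2 with hn
  set g : Polynomial ℝ := (Polynomial.derivative)^[m] f with hgdef
  have hgs : g.Splits := splits_iter_deriv f hs m
  have hgd : g.natDegree ≤ t + 2 := by
    have h2 := natDegree_iterate_derivative f m
    rw [← hgdef] at h2
    omega
  set h : Polynomial ℝ := Polynomial.reflect (t + 2) g with hhdef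
  have hhs : h.Splits := splits_reflect (t + 2) g hgd hgs
  have hhd : h.natDegree ≤ t + 2 := natDegree_reflect_le g (t + 2) hgd
  set q : Polynomial ℝ := (Polynomial.derivative)^[t] h with hqdef
  have hqs : q.Splits := splits_iter_deriv h hhs t
  have hqd : q.natDegree ≤ 2 := by
    have h2 := natDegree_iterate_derivative h t
    rw [← hqdef] at h2
    omega
  have disc := quad_disc q hqd hqs
  set x1 := f.coeff m with hx1
  set x2 := f.coeff (m + 1) with hx2
  set x3 := f.coeff (m + 2) with hx3
  have hc0 : q.coeff 0 = ((Nat.descFactorial t t : ℕ) : ℝ) *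
      (((Nat.descFactorial (m + 2) m : ℕ) : ℝ) * x3) := by
    rw [hqdef, Polynomial.coeff_iterate_derivative, hhdef, coeff_reflect,
      revAt_le (by omega : 0 + t ≤ t + 2), show t + 2 - (0 + t) = 2 by omega,
      hgdef, Polynomial.coeff_iterate_derivative, show 2 + m = m + 2 by omega]
    simp [nsmul_eq_mul, hx3]
  have hc1 : q.coeff 1 = ((Nat.descFactorial (1 + t) t : ℕ) : ℝ) *
      (((Nat.descFactorial (m + 1) m : ℕ) : ℝ) * x2) := by
    rw [hqdef, Polynomial.coeff_iterate_derivative, hhdef, coeff_reflect,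
      revAt_le (by omega : 1 + t ≤ t + 2), show t + 2 - (1 + t) = 1 by omega,
      hgdef, Polynomial.coeff_iterate_derivative, show 1 + m = m + 1 by omega]
    simp [nsmul_eq_mul, hx2]
  have hc2 : q.coeff 2 = ((Nat.descFactorial (2 + t) t : ℕ) : ℝ) *
      (((Nat.descFactorial m m : ℕ) : ℝ) * x1) := by
    rw [hqdef, Polynomial.coeff_iterate_derivative, hhdef, coeff_reflect,
      revAt_le (by omega : 2 + t ≤ t + 2), show t + 2 - (2 + t) = 0 by omega,
      hgdef, Polynomial.coeff_iterate_derivative, show 0 + m = m by omega]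
    simp [nsmul_eq_mul, hx1]
  rw [hc0, hc1, hc2] at disc
  -- descFactorial-to-factorial identities, cast to the reals
  have eA0 : ((Nat.descFactorial t t : ℕ) : ℝ) = (t.factorial : ℝ) := by
    exact_mod_cast congrArg (Nat.cast : ℕ → ℝ) (Nat.descFactorial_self t)
  have eB0 : ((Nat.descFactorial m m : ℕ) : ℝ) = (m.factorial : ℝ) := by
    exact_mod_cast congrArg (Nat.cast : ℕ → ℝ) (Nat.descFactorial_self m)
  have eA1 : ((Nat.descFactorial (1 + t) t : ℕ) : ℝ) = ((t + 1).factorial : ℝ) := by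
    have h := dfact 1 t
    rw [Nat.factorial_one, mul_one] at h
    rw [show t + 1 = 1 + t by omega]
    exact_mod_cast congrArg (Nat.cast : ℕ → ℝ) h
  have eB1 : ((Nat.descFactorial (m + 1) m : ℕ) : ℝ) = ((m + 1).factorial : ℝ) := by
    have h := dfact 1 m
    rw [Nat.factorial_one, mul_one] at h
    rw [show m + 1 = 1 + m by omega]
    exact_mod_cast congrArg (Nat.cast : ℕ → ℝ) h
  have eA2 : ((Nat.descFactorial (2 + t) t : ℕ) : ℝ) * 2 = ((t + 2).factorial : ℝ) := by
    have h := dfact 2 t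
    rw [show Nat.factorial 2 = 2 by rfl] at h
    rw [show t + 2 = 2 + t by omega]
    exact_mod_cast congrArg (Nat.cast : ℕ → ℝ) h
  have eB2 : ((Nat.descFactorial (m + 2) m : ℕ) : ℝ) * 2 = ((m + 2).factorial : ℝ) := by
    have h := dfact 2 m
    rw [show Nat.factorial 2 = 2 by rfl] at h
    rw [show m + 2 = 2 + m by omega]
    exact_mod_cast congrArg (Nat.cast : ℕ → ℝ) h
  -- binomial identities
  have e1 : ((n.choose m : ℕ) : ℝ) * (m.factorial : ℝ) * ((t + 2).factorial : ℝ)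
      = (n.factorial : ℝ) := by
    have h := Nat.choose_mul_factorial_mul_factorial (show m ≤ n by omega)
    rw [show n - m = t + 2 by omega] at h
    exact_mod_cast congrArg (Nat.cast : ℕ → ℝ) h
  have e2 : ((n.choose (m + 1) : ℕ) : ℝ) * ((m + 1).factorial : ℝ) * ((t + 1).factorial : ℝ)
      = (n.factorial : ℝ) := by
    have h := Nat.choose_mul_factorial_mul_factorial (show m + 1 ≤ n by omega)
    rw [show n - (m + 1) = t + 1 by omega] at h
    exact_mod_cast congrArg (Nat.cast : ℕ → ℝ) h
  have e3 : ((n.choose (m + 2) : ℕ) : ℝ) * ((m + 2).factorial : ℝ) * (t.factorial : ℝ)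
      = (n.factorial : ℝ) := by
    have h := Nat.choose_mul_factorial_mul_factorial (show m + 2 ≤ n by omega)
    rw [show n - (m + 2) = t by omega] at h
    exact_mod_cast congrArg (Nat.cast : ℕ → ℝ) h
  have K' : (((t + 2).factorial : ℝ) * (m.factorial : ℝ) * x1) *
        ((t.factorial : ℝ) * ((m + 2).factorial : ℝ) * x3) ≤
      (((t + 1).factorial : ℝ) * ((m + 1).factorial : ℝ) * x2) ^ 2 := by
    calc (((t + 2).factorial : ℝ) * (m.factorial : ℝ) * x1) *
          ((t.factorial : ℝ) * ((m + 2).factorial : ℝ) * x3)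
        = 4 * (((Nat.descFactorial (2 + t) t : ℕ) : ℝ) *
            (((Nat.descFactorial m m : ℕ) : ℝ) * x1) *
            (((Nat.descFactorial t t : ℕ) : ℝ) *
            (((Nat.descFactorial (m + 2) m : ℕ) : ℝ) * x3))) := by
          rw [← eA2, ← eB2, ← eA0, ← eB0]; ring
      _ ≤ (((Nat.descFactorial (1 + t) t : ℕ) : ℝ) *
            (((Nat.descFactorial (m + 1) m : ℕ) : ℝ) * x2)) ^ 2 := disc
      _ = (((t + 1).factorial : ℝ) * ((m + 1).factorial : ℝ) * x2) ^ 2 := by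
          rw [eA1, eB1]; ring
  set c1 : ℝ := ((n.choose m : ℕ) : ℝ) with hc1def
  set c2 : ℝ := ((n.choose (m + 1) : ℕ) : ℝ) with hc2def
  set c3 : ℝ := ((n.choose (m + 2) : ℕ) : ℝ) with hc3def
  have hc1pos : 0 < c1 := by
    rw [hc1def]; exact_mod_cast Nat.choose_pos (show m ≤ n by omega)
  have hc2pos : 0 < c2 := by
    rw [hc2def]; exact_mod_cast Nat.choose_pos (show m + 1 ≤ n by omega)
  have hc3pos : 0 < c3 := by
    rw [hc3def]; exact_mod_cast Nat.choose_pos (show m + 2 ≤ n by omega)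
  rw [div_mul_div_comm, div_pow, div_le_div_iff₀ (by positivity) (by positivity)]
  have hnfpos : (0 : ℝ) < (n.factorial : ℝ) := by exact_mod_cast n.factorial_pos
  have H : (n.factorial : ℝ) ^ 2 * (x3 * x1 * c2 ^ 2) ≤
      (n.factorial : ℝ) ^ 2 * (x2 ^ 2 * (c3 * c1)) := by
    have en : (c1 * (m.factorial : ℝ) * ((t + 2).factorial : ℝ)) *
        (c3 * ((m + 2).factorial : ℝ) * (t.factorial : ℝ)) = (n.factorial : ℝ) ^ 2 := by
      rw [e1, e3]; ring
    calc (n.factorial : ℝ) ^ 2 * (x3 * x1 * c2 ^ 2)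
        = (c1 * c2 ^ 2 * c3) * ((((t + 2).factorial : ℝ) * (m.factorial : ℝ) * x1) *
            ((t.factorial : ℝ) * ((m + 2).factorial : ℝ) * x3)) := by rw [← en]; ring
      _ ≤ (c1 * c2 ^ 2 * c3) * ((((t + 1).factorial : ℝ) * ((m + 1).factorial : ℝ) * x2) ^ 2) := by
          apply mul_le_mul_of_nonneg_left K' (by positivity)
      _ = (c1 * c3) * ((c2 * ((m + 1).factorial : ℝ) * ((t + 1).factorial : ℝ)) ^ 2 * x2 ^ 2) := by
          ring
      _ = (c1 * c3) * ((n.factorial : ℝ) ^ 2 * x2 ^ 2) := by rw [e2]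
      _ = (n.factorial : ℝ) ^ 2 * (x2 ^ 2 * (c3 * c1)) := by ring
  exact le_of_mul_le_mul_left H (by positivity)

/-- **Newton's inequalities.**
Let `n ≥ 2` and let `f(z) = ∑_{k=0}^n a_k z^k` be a real polynomial of degree at most
`n` all of whose complex roots are real.  Then for `1 ≤ k ≤ n - 1`,
`(a_k / C(n,k))² ≥ (a_{k+1} / C(n,k+1)) · (a_{k-1} / C(n,k-1))`.  If moreover all
coefficients are nonnegative, then every complex root of `f` is real and nonpositive. -/
theorem stmt5 (n : ℕ) (hn : 2 ≤ n) (f : Polynomial ℝ) (hdeg : f.natDegree ≤ n)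
    (hroots : ∀ z : ℂ, Polynomial.aeval z f = 0 → z.im = 0) :
    (∀ k, 1 ≤ k → k ≤ n - 1 →
      (f.coeff (k + 1) / (n.choose (k + 1) : ℝ)) *
          (f.coeff (k - 1) / (n.choose (k - 1) : ℝ)) ≤
        (f.coeff k / (n.choose k : ℝ)) ^ 2) ∧
    ((∀ k, 0 ≤ f.coeff k) →
      ∀ z : ℂ, Polynomial.aeval z f = 0 → ∃ r : ℝ, r ≤ 0 ∧ z = (r : ℂ)) := by
  have hf0 : f ≠ 0 := by
    intro h
    have := hroots Complex.I (by simp [h])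
    simp at this
  have hsplit : f.Splits :=
    splits_of_roots_real f.natDegree f le_rfl hroots
  constructor
  · intro k hk1 hk2
    obtain ⟨m, rfl⟩ : ∃ m, k = m + 1 := ⟨k - 1, by omega⟩
    obtain ⟨t, rfl⟩ : ∃ t, n = m + t + 2 := ⟨n - m - 2, by omega⟩
    rw [show m + 1 + 1 = m + 2 from by omega, show m + 1 - 1 = m from by omega]
    exact newton_aux m t f (by omega) hsplit
  · intro hnn z hz
    have him := hroots z hz
    refine ⟨z.re, ?_, ?_⟩
    · by_contra hpos
      push_neg at hpos
      have heval : f.eval z.re = 0 := by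
        have h2 : (algebraMap ℝ ℂ) (f.eval z.re) = 0 := by
          rw [← aeval_algebraMap_apply_eq_algebraMap_eval]
          show Polynomial.aeval ((algebraMap ℝ ℂ) z.re) f = 0
          have hzr : (algebraMap ℝ ℂ) z.re = z := by
            apply Complex.ext <;> simp [him]
          rw [hzr, hz]
        exact (_root_.map_eq_zero (algebraMap ℝ ℂ)).mp h2
      rw [Polynomial.eval_eq_sum_range] at heval
      have hterm : ∀ i ∈ Finset.range (f.natDegree + 1), (0:ℝ) ≤ f.coeff i * z.re ^ i := by
        intro i _
        exact mul_nonneg (hnn i) (by positivity)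
      have hall := (Finset.sum_eq_zero_iff_of_nonneg hterm).mp heval
      have hld := hall f.natDegree (Finset.self_mem_range_succ _)
      have : f.coeff f.natDegree = 0 := by
        have hzp : (0:ℝ) < z.re ^ f.natDegree := by positivity
        by_contra hne
        exact hne (by nlinarith)
      exact hf0 (leadingCoeff_eq_zero.mp this)
    · apply Complex.ext <;> simp [him]
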